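/- arXiv:2309.16352 — 3 statements merged into one kernel-verified Lean document; each statement's English description precedes it below -/
import Mathlib

section
/- Let P be an N×N column-stochastic real matrix, let β > 1/2 and γ > 0, and suppose that in every column of P at least β·N of the entries are bounded below by γ/N. Then the maximum pairwise column distance satisfies d(P) ≤ 1 − γ·(1 − 2(1 − β)) = 1 − γ·(2β − 1). -/
/-- If in every column of an `N×N` column-stochastic matrix `P` at
least `β·N` entries are at least `γ/N` (with `β > 1/2`, `γ > 0`), then the maximum
pairwise column distance satisfies `d(P) ≤ 1 − γ·(2β − 1)`. -/
theorem column_distance_from_large_entries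
    (N : ℕ) (P : Matrix (Fin N) (Fin N) ℝ)
    (hnonneg : ∀ i j, 0 ≤ P i j) (hcol : ∀ j, ∑ i, P i j = 1)
    (β γ : ℝ) (hβ : 1 / 2 < β) (hγ : 0 < γ)
    (hentries : ∀ j,
      β * (N : ℝ) ≤ ((Finset.univ.filter fun i => γ / (N : ℝ) ≤ P i j).card : ℝ)) :
    ∀ j j', (1 / 2) * ∑ i, |P i j - P i j'| ≤ 1 - γ * (2 * β - 1) := by
  intro j j'
  have hN : 0 < N := j.pos
  have hNR : (0:ℝ) < (N:ℝ) := by exact_mod_cast hN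
  set S := Finset.univ.filter fun i => γ / (N:ℝ) ≤ P i j with hSdef
  set T := Finset.univ.filter fun i => γ / (N:ℝ) ≤ P i j' with hTdef
  have hcard : ((2*β-1)*N : ℝ) ≤ ((S ∩ T).card : ℝ) := by
    have h1 : S.card + T.card ≤ (S ∩ T).card + (S ∪ T).card := by
      have := Finset.card_union_add_card_inter S T
      omega
    have h2 : (S ∪ T).card ≤ N := by
      simpa using Finset.card_le_univ (S ∪ T)
    have hS := hentries j
    have hT := hentries j'
    have h1' : (S.card : ℝ) + T.card ≤ ((S ∩ T).card : ℝ) + (S ∪ T).card := by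
      exact_mod_cast h1
    have h2' : ((S ∪ T).card : ℝ) ≤ N := by exact_mod_cast h2
    rw [← hSdef] at hS
    rw [← hTdef] at hT
    nlinarith
  have hmin : γ * (2*β-1) ≤ ∑ i, min (P i j) (P i j') := by
    have hsub : ∑ _i ∈ S ∩ T, (γ / (N:ℝ)) ≤ ∑ i ∈ S ∩ T, min (P i j) (P i j') := by
      apply Finset.sum_le_sum
      intro i hi
      rw [Finset.mem_inter, hSdef, hTdef, Finset.mem_filter, Finset.mem_filter] at hi
      exact le_min hi.1.2 hi.2.2
    have hle : ∑ i ∈ S ∩ T, min (P i j) (P i j') ≤ ∑ i, min (P i j) (P i j') :=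
      Finset.sum_le_sum_of_subset_of_nonneg (Finset.subset_univ _)
        (fun i _ _ => le_min (hnonneg i j) (hnonneg i j'))
    have hconst : ∑ _i ∈ S ∩ T, (γ / (N:ℝ)) = ((S ∩ T).card : ℝ) * (γ / N) := by
      rw [Finset.sum_const, nsmul_eq_mul]
    have hkey : γ * (2*β-1) ≤ ((S ∩ T).card : ℝ) * (γ / N) := by
      have : γ * (2*β-1) = ((2*β-1)*N) * (γ / N) := by field_simp
      rw [this]
      exact mul_le_mul_of_nonneg_right hcard (by positivity)
    calc γ * (2*β-1) ≤ ((S ∩ T).card : ℝ) * (γ / N) := hkey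
      _ = ∑ _i ∈ S ∩ T, (γ / (N:ℝ)) := hconst.symm
      _ ≤ ∑ i ∈ S ∩ T, min (P i j) (P i j') := hsub
      _ ≤ ∑ i, min (P i j) (P i j') := hle
  have habs : ∑ i, |P i j - P i j'| = 2 - 2 * ∑ i, min (P i j) (P i j') := by
    have hpt : ∀ i, |P i j - P i j'| = P i j + P i j' - 2 * min (P i j) (P i j') := by
      intro i
      rcases le_total (P i j) (P i j') with h | h
      · rw [abs_of_nonpos (by linarith), min_eq_left h]; ring
      · rw [abs_of_nonneg (by linarith), min_eq_right h]; ring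
    rw [Finset.sum_congr rfl fun i _ => hpt i]
    rw [Finset.sum_sub_distrib, Finset.sum_add_distrib, hcol, hcol, ← Finset.mul_sum]
    ring
  linarith
end

section
/- Let P and Q be N×N column-stochastic real matrices. Then the maximum pairwise column distance is submultiplicative: d(PQ) ≤ d(P)·d(Q), where d(M) = max_{j,j'} (1/2)·Σ_i |M(i,j) − M(i,j')|. Consequently d(P^t) ≤ d(P)^t for every integer t ≥ 1. -/
/-- The maximum pairwise column distance of a square matrix. -/
noncomputable def pairwiseColDist (N : ℕ) (M : Matrix (Fin N) (Fin N) ℝ) : ℝ :=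
  ⨆ p : Fin N × Fin N, (1 / 2) * ∑ i, |M i p.1 - M i p.2|

lemma pcd_bdd (N : ℕ) (M : Matrix (Fin N) (Fin N) ℝ) :
    BddAbove (Set.range fun p : Fin N × Fin N => (1 / 2) * ∑ i, |M i p.1 - M i p.2|) :=
  (Set.finite_range _).bddAbove

lemma pcd_ge (N : ℕ) (M : Matrix (Fin N) (Fin N) ℝ) (p : Fin N × Fin N) :
    (1 / 2) * ∑ i, |M i p.1 - M i p.2| ≤ pairwiseColDist N M :=
  le_ciSup (pcd_bdd N M) p

lemma pcd_col (N : ℕ) (M : Matrix (Fin N) (Fin N) ℝ) (j j' : Fin N) :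
    ∑ i, |M i j - M i j'| ≤ 2 * pairwiseColDist N M := by
  have := pcd_ge N M (j, j')
  simp only at this
  linarith

lemma pcd_nonneg (N : ℕ) (hN : 0 < N) (M : Matrix (Fin N) (Fin N) ℝ) :
    0 ≤ pairwiseColDist N M := by
  have := pcd_ge N M (⟨0, hN⟩, ⟨0, hN⟩)
  simpa using this

/-- The key contraction lemma: for a zero-sum vector `x`,
`‖P x‖₁ ≤ d(P) ‖x‖₁`. -/
lemma pcd_contract (N : ℕ) (hN : 0 < N) (P : Matrix (Fin N) (Fin N) ℝ)
    (x : Fin N → ℝ) (hx : ∑ i, x i = 0) :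
    ∑ i, |∑ j, P i j * x j| ≤ pairwiseColDist N P * ∑ i, |x i| := by
  set xp : Fin N → ℝ := fun j => max (x j) 0 with hxp
  set xm : Fin N → ℝ := fun j => max (-x j) 0 with hxm
  have hpm : ∀ j, xp j - xm j = x j := by
    intro j; simp only [hxp, hxm]
    rcases le_total (x j) 0 with h | h
    · rw [max_eq_right h, max_eq_left (by linarith)]; ring
    · rw [max_eq_left h, max_eq_right (by linarith)]; ring
  have habs : ∀ j, xp j + xm j = |x j| := by
    intro j; simp only [hxp, hxm]
    rcases le_total (x j) 0 with h | h
    · rw [max_eq_right h, max_eq_left (by linarith), abs_of_nonpos h]; ring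
    · rw [max_eq_left h, max_eq_right (by linarith), abs_of_nonneg h]; ring
  have hxpn : ∀ j, 0 ≤ xp j := fun j => le_max_right _ _
  have hxmn : ∀ j, 0 ≤ xm j := fun j => le_max_right _ _
  set s : ℝ := ∑ j, xp j with hs
  have hsnn : 0 ≤ s := Finset.sum_nonneg fun j _ => hxpn j
  have hsm : ∑ j, xm j = s := by
    have : ∑ j, (xp j - xm j) = 0 := by simp_rw [hpm]; exact hx
    rw [Finset.sum_sub_distrib] at this
    linarith
  have hsum_abs : ∑ j, |x j| = 2 * s := by
    calc ∑ j, |x j| = ∑ j, (xp j + xm j) := by simp_rw [habs]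
    _ = s + s := by rw [Finset.sum_add_distrib, hsm]
    _ = 2 * s := by ring
  rcases eq_or_lt_of_le hsnn with hs0 | hs0
  · -- s = 0, hence x = 0
    have hx0 : ∀ j, x j = 0 := by
      intro j
      have h1 : ∑ j, |x j| = 0 := by rw [hsum_abs, ← hs0]; ring
      have h2 := (Finset.sum_eq_zero_iff_of_nonneg (fun j _ => abs_nonneg (x j))).mp h1 j
        (Finset.mem_univ j)
      exact abs_eq_zero.mp h2
    simp [hx0]
  · -- main case
    have hkey : ∀ i, |∑ j, P i j * x j| ≤
        (1 / s) * ∑ j, ∑ k, xp j * xm k * |P i j - P i k| := by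
      intro i
      have hrep : s * ∑ j, P i j * x j = ∑ j, ∑ k, xp j * xm k * (P i j - P i k) := by
        have e1 : ∀ j, ∑ k, xp j * xm k * (P i j - P i k)
            = (xp j * P i j) * s - xp j * ∑ k, xm k * P i k := by
          intro j
          calc ∑ k, xp j * xm k * (P i j - P i k)
              = (xp j * P i j) * (∑ k, xm k) - xp j * ∑ k, xm k * P i k := by
                rw [Finset.mul_sum, Finset.mul_sum, ← Finset.sum_sub_distrib]
                exact Finset.sum_congr rfl fun k _ => by ring
            _ = (xp j * P i j) * s - xp j * ∑ k, xm k * P i k := by rw [hsm]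
        simp_rw [e1, Finset.sum_sub_distrib, ← Finset.sum_mul]
        have e2 : ∑ j, P i j * x j = ∑ j, (xp j * P i j) - ∑ j, (xm j * P i j) := by
          rw [← Finset.sum_sub_distrib]
          refine Finset.sum_congr rfl fun j _ => ?_
          rw [← hpm j]; ring
        rw [e2, ← hs]; ring
      have hrep2 : ∑ j, P i j * x j = (1 / s) *
          ∑ j, ∑ k, xp j * xm k * (P i j - P i k) := by
        field_simp at hrep ⊢
        linarith [hrep]
      rw [hrep2, abs_mul, abs_of_nonneg (by positivity : (0:ℝ) ≤ 1 / s)]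
      gcongr 1 / s * ?_
      calc |∑ j, ∑ k, xp j * xm k * (P i j - P i k)|
          ≤ ∑ j, |∑ k, xp j * xm k * (P i j - P i k)| := Finset.abs_sum_le_sum_abs _ _
        _ ≤ ∑ j, ∑ k, |xp j * xm k * (P i j - P i k)| := by
            gcongr with j hj; exact Finset.abs_sum_le_sum_abs _ _
        _ = ∑ j, ∑ k, xp j * xm k * |P i j - P i k| := by
            refine Finset.sum_congr rfl fun j _ => Finset.sum_congr rfl fun k _ => ?_
            rw [abs_mul, abs_mul, abs_of_nonneg (hxpn j), abs_of_nonneg (hxmn k)]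
    calc ∑ i, |∑ j, P i j * x j|
        ≤ ∑ i, (1 / s) * ∑ j, ∑ k, xp j * xm k * |P i j - P i k| :=
          Finset.sum_le_sum fun i _ => hkey i
      _ = (1 / s) * ∑ j, ∑ k, xp j * xm k * ∑ i, |P i j - P i k| := by
          rw [← Finset.mul_sum]
          congr 1
          rw [Finset.sum_comm]
          refine Finset.sum_congr rfl fun j _ => ?_
          rw [Finset.sum_comm]
          refine Finset.sum_congr rfl fun k _ => ?_
          rw [Finset.mul_sum]
      _ ≤ (1 / s) * ∑ j, ∑ k, xp j * xm k * (2 * pairwiseColDist N P) := by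
          apply mul_le_mul_of_nonneg_left _ (by positivity)
          refine Finset.sum_le_sum fun j _ => Finset.sum_le_sum fun k _ => ?_
          exact mul_le_mul_of_nonneg_left (pcd_col N P j k) (mul_nonneg (hxpn j) (hxmn k))
      _ = (1 / s) * (s * s * (2 * pairwiseColDist N P)) := by
          have hA : ∀ j, ∑ k, xp j * xm k * (2 * pairwiseColDist N P)
              = xp j * (s * (2 * pairwiseColDist N P)) := by
            intro j
            simp_rw [mul_assoc]
            rw [← Finset.mul_sum, ← Finset.sum_mul, hsm]
          simp_rw [hA]
          rw [← Finset.sum_mul, ← hs]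
          ring
      _ = pairwiseColDist N P * (2 * s) := by field_simp
      _ = pairwiseColDist N P * ∑ i, |x i| := by rw [hsum_abs]

lemma pcd_mul (N : ℕ) (hN : 0 < N) (P Q : Matrix (Fin N) (Fin N) ℝ)
    (hQcol : ∀ j, ∑ i, Q i j = 1) :
    pairwiseColDist N (P * Q) ≤ pairwiseColDist N P * pairwiseColDist N Q := by
  haveI : Nonempty (Fin N × Fin N) := ⟨(⟨0, hN⟩, ⟨0, hN⟩)⟩
  apply ciSup_le
  rintro ⟨j, j'⟩
  set x : Fin N → ℝ := fun k => Q k j - Q k j' with hxdef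
  have hx : ∑ k, x k = 0 := by
    simp [hxdef, Finset.sum_sub_distrib, hQcol]
  have h1 : ∀ i, (P * Q) i j - (P * Q) i j' = ∑ k, P i k * x k := by
    intro i
    simp [Matrix.mul_apply, hxdef, Finset.sum_sub_distrib, mul_sub]
  have h2 : ∑ k, |x k| ≤ 2 * pairwiseColDist N Q := pcd_col N Q j j'
  have h3 := pcd_contract N hN P x hx
  have h4 : pairwiseColDist N P * ∑ k, |x k|
      ≤ pairwiseColDist N P * (2 * pairwiseColDist N Q) :=
    mul_le_mul_of_nonneg_left h2 (pcd_nonneg N hN P)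
  simp only [h1]
  nlinarith [pcd_nonneg N hN P]

/-- The maximum pairwise column distance is submultiplicative for
column-stochastic matrices: `d(PQ) ≤ d(P)·d(Q)`, and consequently
`d(P^t) ≤ d(P)^t` for every `t ≥ 1`. -/
theorem pairwiseColDist_submultiplicative
    (N : ℕ) (hN : 0 < N) (P Q : Matrix (Fin N) (Fin N) ℝ)
    (hPnonneg : ∀ i j, 0 ≤ P i j) (hPcol : ∀ j, ∑ i, P i j = 1)
    (hQnonneg : ∀ i j, 0 ≤ Q i j) (hQcol : ∀ j, ∑ i, Q i j = 1) :
    pairwiseColDist N (P * Q) ≤ pairwiseColDist N P * pairwiseColDist N Q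
      ∧ ∀ t : ℕ, 1 ≤ t → pairwiseColDist N (P ^ t) ≤ (pairwiseColDist N P) ^ t := by
  have hpowcol : ∀ t : ℕ, ∀ j, ∑ i, (P ^ t) i j = 1 := by
    intro t
    induction t with
    | zero => intro j; simp [Matrix.one_apply, Finset.sum_ite_eq]
    | succ t ih =>
      intro j
      rw [pow_succ]
      simp only [Matrix.mul_apply]
      rw [Finset.sum_comm]
      calc ∑ k, ∑ i, (P ^ t) i k * P k j
          = ∑ k, (∑ i, (P ^ t) i k) * P k j := by simp_rw [Finset.sum_mul]
        _ = ∑ k, P k j := by simp_rw [ih]; simp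
        _ = 1 := hPcol j
  refine ⟨pcd_mul N hN P Q hQcol, ?_⟩
  intro t ht
  induction t with
  | zero => omega
  | succ t ih =>
    rcases Nat.eq_or_lt_of_le ht with h1 | h1
    · simp [← h1]
    · have ht' : 1 ≤ t := by omega
      have := pcd_mul N hN P (P ^ t) (hpowcol t)
      rw [← pow_succ'] at this
      calc pairwiseColDist N (P ^ (t + 1))
          ≤ pairwiseColDist N P * pairwiseColDist N (P ^ t) := this
        _ ≤ pairwiseColDist N P * pairwiseColDist N P ^ t :=
            mul_le_mul_of_nonneg_left (ih ht') (pcd_nonneg N hN P)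
        _ = pairwiseColDist N P ^ (t + 1) := by rw [pow_succ']
end

section
/- For every integer n ≥ 2, Σ_{y=1}^{n−1} 1/sin(πy/n) ≤ 2·n·ln(n). -/
open Real Finset

private lemma inv_sin_le_of_le_half (n y : ℕ) (h0 : 0 < y) (h2 : 2 * y ≤ n) :
    1 / Real.sin (Real.pi * y / n) ≤ (n : ℝ) / (2 * y) := by
  have hn0 : (0:ℝ) < n := by
    have : 0 < n := by omega
    exact_mod_cast this
  have hy0 : (0:ℝ) < y := by exact_mod_cast h0
  have hpi := Real.pi_pos
  have hx0 : 0 ≤ Real.pi * y / n := by positivity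
  have hx1 : Real.pi * y / n ≤ Real.pi / 2 := by
    rw [div_le_div_iff₀ hn0 (by norm_num)]
    have h2' : (2:ℝ) * y ≤ n := by exact_mod_cast h2
    nlinarith
  have hsin := Real.mul_le_sin hx0 hx1
  have hsin' : (2 * y : ℝ) / n ≤ Real.sin (Real.pi * y / n) := by
    have : 2 / Real.pi * (Real.pi * y / n) = 2 * y / n := by
      field_simp
    linarith [this ▸ hsin]
  have ha : (0:ℝ) < 2 * y / n := by positivity
  calc 1 / Real.sin (Real.pi * y / n) ≤ 1 / ((2 * y : ℝ) / n) :=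
        one_div_le_one_div_of_le ha hsin'
    _ = (n : ℝ) / (2 * y) := one_div_div _ _

private lemma term_bound (n y : ℕ) (hy1 : 1 ≤ y) (hyn : y < n) :
    1 / Real.sin (Real.pi * y / n)
      ≤ (n : ℝ) / (2 * y) + (n : ℝ) / (2 * (n - y)) := by
  have hn0 : (0:ℝ) < n := by
    have : 0 < n := by omega
    exact_mod_cast this
  have hy0 : (0:ℝ) < y := by exact_mod_cast hy1
  have hny : (y:ℝ) < n := by exact_mod_cast hyn
  rcases le_or_gt (2 * y) n with h | h
  · have := inv_sin_le_of_le_half n y hy1 h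
    have h2 : (0:ℝ) ≤ (n : ℝ) / (2 * (n - y)) := by
      have : (0:ℝ) < (n:ℝ) - y := by linarith
      positivity
    linarith
  · have hz1 : 1 ≤ n - y := by omega
    have hz2 : 2 * (n - y) ≤ n := by omega
    have key := inv_sin_le_of_le_half n (n - y) hz1 hz2
    have hc : ((n - y : ℕ) : ℝ) = (n : ℝ) - y := by
      rw [Nat.cast_sub (le_of_lt hyn)]
    rw [hc] at key
    have hsin_eq : Real.sin (Real.pi * ((n:ℝ) - y) / n) = Real.sin (Real.pi * y / n) := by
      have : Real.pi * ((n:ℝ) - y) / n = Real.pi - Real.pi * y / n := by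
        field_simp
      rw [this, Real.sin_pi_sub]
    rw [hsin_eq] at key
    have h1 : (0:ℝ) ≤ (n : ℝ) / (2 * y) := by positivity
    linarith

private lemma sum_reflect (n : ℕ) (hn : 2 ≤ n) :
    ∑ y ∈ Finset.Icc 1 (n - 1), (n : ℝ) / (2 * ((n:ℝ) - y))
      = ∑ y ∈ Finset.Icc 1 (n - 1), (n : ℝ) / (2 * y) := by
  refine Finset.sum_nbij' (fun y => n - y) (fun y => n - y) ?_ ?_ ?_ ?_ ?_
  · intro a ha; simp only [Finset.mem_Icc] at ha ⊢; omega
  · intro a ha; simp only [Finset.mem_Icc] at ha ⊢; omega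
  · intro a ha; simp only [Finset.mem_Icc] at ha; show n - (n - a) = a; omega
  · intro a ha; simp only [Finset.mem_Icc] at ha; show n - (n - a) = a; omega
  · intro a ha
    simp only [Finset.mem_Icc] at ha
    have : ((n - a : ℕ) : ℝ) = (n : ℝ) - a := by
      rw [Nat.cast_sub (by omega)]
    rw [this]

private lemma one_add_log_le (n : ℕ) (hn : 2 ≤ n) :
    1 + Real.log (n - 1 : ℕ) ≤ 2 * Real.log n := by
  rcases eq_or_lt_of_le hn with h | h
  · subst h
    norm_num
    have := Real.log_two_gt_d9
    linarith
  · have h3 : 3 ≤ n := h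
    have hlog1 : Real.log ((n - 1 : ℕ) : ℝ) ≤ Real.log n := by
      apply Real.log_le_log (by exact_mod_cast (by omega : 0 < n - 1))
      exact_mod_cast (by omega : n - 1 ≤ n)
    have hlog2 : 1 < Real.log n := by
      rw [Real.lt_log_iff_exp_lt (by exact_mod_cast (by omega : 0 < n))]
      calc Real.exp 1 < 2.7182818286 := Real.exp_one_lt_d9
        _ ≤ (n : ℝ) := by
          have : (3:ℝ) ≤ n := by exact_mod_cast h3
          linarith
    linarith

/-- For every `n ≥ 2`, `Σ_{y=1}^{n−1} 1/sin(πy/n) ≤ 2·n·ln n`. -/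
theorem sum_inv_sin_le (n : ℕ) (hn : 2 ≤ n) :
    ∑ y ∈ Finset.Icc 1 (n - 1), 1 / Real.sin (Real.pi * y / n)
      ≤ 2 * (n : ℝ) * Real.log n := by
  have step1 : ∑ y ∈ Finset.Icc 1 (n - 1), 1 / Real.sin (Real.pi * y / n)
      ≤ ∑ y ∈ Finset.Icc 1 (n - 1), ((n : ℝ) / (2 * y) + (n : ℝ) / (2 * ((n:ℝ) - y))) := by
    apply Finset.sum_le_sum
    intro y hy
    simp only [Finset.mem_Icc] at hy
    exact term_bound n y hy.1 (by omega)
  have step2 : ∑ y ∈ Finset.Icc 1 (n - 1), ((n : ℝ) / (2 * y) + (n : ℝ) / (2 * ((n:ℝ) - y)))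
      = (n : ℝ) * (harmonic (n - 1) : ℝ) := by
    rw [Finset.sum_add_distrib, sum_reflect n hn, ← two_mul]
    rw [harmonic_eq_sum_Icc]
    push_cast
    rw [Finset.mul_sum, Finset.mul_sum]
    congr 1
    ext y
    rw [← mul_div_assoc, mul_div_mul_left _ _ (two_ne_zero), div_eq_mul_inv]
  have step3 : (harmonic (n - 1) : ℝ) ≤ 1 + Real.log (n - 1 : ℕ) := harmonic_le_one_add_log _
  have step4 := one_add_log_le n hn
  have hn0 : (0:ℝ) ≤ n := by positivity
  calc ∑ y ∈ Finset.Icc 1 (n - 1), 1 / Real.sin (Real.pi * y / n)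
      ≤ (n : ℝ) * (harmonic (n - 1) : ℝ) := step1.trans_eq step2
    _ ≤ (n : ℝ) * (2 * Real.log n) := by
        apply mul_le_mul_of_nonneg_left (step3.trans step4) hn0
    _ = 2 * (n : ℝ) * Real.log n := by ring
end
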